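/- (Theorem 3.2) Suppose n ≥ 2 and the edge set E forms a tree on Fin n. Given univariate pmfs μ_i, bivariate pmfs μ_{ij} for (i,j) ∈ E, ρ ≥ 0, K ≥ 1, vectors a_k ∈ ℝ^n and scalars b_k ∈ ℝ, the optimal value of the polynomial-sized convex program (cp1) equals the Fréchet bound; precisely: the supremum of Σ_{k} Σ_{i ∈ Fin n} Σ_{x ∈ C i} x * a_{k,i} * v^k_i(x) + Σ_k b_k * w_k over all tuples (w, (v^k_i), (v^k_{ij}), (θ_{ij})) satisfying: w_k ≥ 0 for all k and Σ_k w_k = 1; v^k_{ij} : C i × C j → ℝ is nonnegative for each (i,j) ∈ E and k; v^k_i : C i → ℝ for each i and k; Σ_{y ∈ C j} v^k_{ij}(x,y) = v^k_i(x) and Σ_{x ∈ C i} v^k_{ij}(x,y) = v^k_j(y) for each (i,j) ∈ E and k; Σ_{x ∈ C i} v^k_i(x) = w_k for each i and k; Σ_{(x,y)} v^k_{ij}(x,y) = w_k for each (i,j) ∈ E and k; Σ_k v^k_i(x) = μ_i(x) for each i and x; and for each (i,j) ∈ E, θ_{ij} = Σ_k v^k_{ij} vanishes wherever μ_{ij}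 vanishes and I_KL(θ_{ij}, μ_{ij}) ≤ ρ — equals the supremum over θ ∈ Θ_ρ of E_θ[ψ]. -/

import Mathlib

open Finset

noncomputable section

abbrev Pt {n : ℕ} (C : Fin n → Finset ℝ) := (i : Fin n) → {x : ℝ // x ∈ C i}

def IsJoint {n : ℕ} {C : Fin n → Finset ℝ} (θ : Pt C → ℝ) : Prop :=
  (∀ c, 0 ≤ θ c) ∧ ∑ c : Pt C, θ c = 1

def projUni {n : ℕ} {C : Fin n → Finset ℝ} (θ : Pt C → ℝ) (i : Fin n)
    (x : {x : ℝ // x ∈ C i}) : ℝ :=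
  ∑ c : Pt C, if c i = x then θ c else 0

def projBi {n : ℕ} {C : Fin n → Finset ℝ} (θ : Pt C → ℝ) (i j : Fin n)
    (p : {x : ℝ // x ∈ C i} × {y : ℝ // y ∈ C j}) : ℝ :=
  ∑ c : Pt C, if c i = p.1 ∧ c j = p.2 then θ c else 0

def IsPmf {S : Type*} [Fintype S] (p : S → ℝ) : Prop :=
  (∀ s, 0 ≤ p s) ∧ ∑ s, p s = 1

def KL {S : Type*} [Fintype S] (p q : S → ℝ) : ℝ :=
  ∑ s, if 0 < p s then p s * Real.log (p s / q s) else 0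

def Vanishes {S : Type*} (p q : S → ℝ) : Prop := ∀ s, q s = 0 → p s = 0

def treeGraph {n : ℕ} (E : Finset (Fin n × Fin n)) : SimpleGraph (Fin n) :=
  SimpleGraph.fromRel (fun i j => (i, j) ∈ E)

def IsTreeEdges {n : ℕ} (E : Finset (Fin n × Fin n)) : Prop :=
  (∀ e ∈ E, e.1 < e.2) ∧ (treeGraph E).IsTree

def psi {n : ℕ} {C : Fin n → Finset ℝ} {K : ℕ} (a : Fin K → Fin n → ℝ) (b : Fin K → ℝ)
    (c : Pt C) : ℝ :=
  ⨆ k : Fin K, (∑ i, a k i * (c i : ℝ) + b k)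

def InTheta {n : ℕ} {C : Fin n → Finset ℝ} (E : Finset (Fin n × Fin n))
    (μU : (i : Fin n) → {x : ℝ // x ∈ C i} → ℝ)
    (μB : (i j : Fin n) → ({x : ℝ // x ∈ C i} × {y : ℝ // y ∈ C j}) → ℝ)
    (ρ : ℝ) (θ : Pt C → ℝ) : Prop :=
  IsJoint θ ∧ (∀ i, projUni θ i = μU i) ∧
  ∀ i j, (i, j) ∈ E →
    Vanishes (projBi θ i j) (μB i j) ∧ KL (projBi θ i j) (μB i j) ≤ ρ
section Helpers

variable {n : ℕ} {C : Fin n → Finset ℝ}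

lemma hsum2 {S : Type*} [Fintype S] [DecidableEq S] (s0 : S) (P : Prop) [Decidable P]
    (f : S → ℝ) : ∑ s, (if s0 = s ∧ P then f s else 0) = if P then f s0 else 0 := by
  by_cases hP : P <;> simp [hP]

lemma hsum0 {S : Type*} [Fintype S] [DecidableEq S] (s0 : S) (f : S → ℝ) :
    ∑ s, (if s0 = s then f s else 0) = f s0 := by simp

lemma hsum0' {S : Type*} [Fintype S] [DecidableEq S] (s0 : S) (f : S → ℝ) :
    ∑ s, (if s = s0 then f s else 0) = f s0 := by simp

lemma key_split (i : Fin n) (F Q : Pt C → ℝ)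
    (hF : ∀ c x, F (Function.update c i x) = F c) :
    ((C i).card : ℝ) * ∑ c : Pt C, F c * Q c
      = ∑ c : Pt C, F c * ∑ x : {x : ℝ // x ∈ C i}, Q (Function.update c i x) := by
  classical
  set e := Equiv.piSplitAt i (fun j => {x : ℝ // x ∈ C j}) with he
  have hupd : ∀ (x x' : {x : ℝ // x ∈ C i}) r,
      e.symm (x, r) = Function.update (e.symm (x', r)) i x := by
    intro x x' r
    funext j
    by_cases hj : j = i
    · subst hj; simp [he, Equiv.piSplitAt, Function.update]
    · simp [he, Equiv.piSplitAt, Function.update, hj]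
  have hsum : ∀ (H : Pt C → ℝ), ∑ c : Pt C, H c
      = ∑ x : {x : ℝ // x ∈ C i}, ∑ r, H (e.symm (x, r)) := by
    intro H
    rw [← Equiv.sum_comp e.symm H, Fintype.sum_prod_type]
  have hFF : ∀ (x x' : {x : ℝ // x ∈ C i}) r, F (e.symm (x, r)) = F (e.symm (x', r)) := by
    intro x x' r
    rw [hupd x x' r, hF]
  rw [hsum (fun c => F c * Q c), hsum (fun c => F c * ∑ x, Q (Function.update c i x))]
  have hcard : ((C i).card : ℝ) = (Fintype.card {x : ℝ // x ∈ C i} : ℝ) := by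
    rw [Fintype.card_coe]
  calc ((C i).card : ℝ) * ∑ x, ∑ r, F (e.symm (x, r)) * Q (e.symm (x, r))
      = ∑ x : {x : ℝ // x ∈ C i}, ∑ x', ∑ r, F (e.symm (x', r)) * Q (e.symm (x', r)) := by
        rw [Finset.sum_const, nsmul_eq_mul, Finset.card_univ, ← hcard]
    _ = ∑ x : {x : ℝ // x ∈ C i}, ∑ r, F (e.symm (x, r)) * ∑ x', Q (e.symm (x', r)) := by
        refine Finset.sum_congr rfl fun x _ => ?_
        rw [Finset.sum_comm]
        refine Finset.sum_congr rfl fun r _ => ?_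
        rw [Finset.mul_sum]
        refine Finset.sum_congr rfl fun x' _ => ?_
        rw [hFF x x' r]
    _ = ∑ x, ∑ r, F (e.symm (x, r)) * ∑ x', Q (Function.update (e.symm (x, r)) i x') := by
        refine Finset.sum_congr rfl fun x _ => ?_
        refine Finset.sum_congr rfl fun r _ => ?_
        congr 1
        refine Finset.sum_congr rfl fun x' _ => ?_
        rw [← hupd x' x r]

lemma sum_fiber (i : Fin n) (F : Pt C → ℝ) (h : {x : ℝ // x ∈ C i} → ℝ) :
    ∑ c : Pt C, F c * h (c i)
      = ∑ z, h z * ∑ c : Pt C, (if c i = z then F c else 0) := by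
  classical
  have : ∀ z : {x : ℝ // x ∈ C i}, h z * ∑ c : Pt C, (if c i = z then F c else 0)
      = ∑ c : Pt C, (if c i = z then F c * h (c i) else 0) := by
    intro z
    rw [Finset.mul_sum]
    refine Finset.sum_congr rfl fun c _ => ?_
    by_cases hc : c i = z
    · rw [if_pos hc, if_pos hc, hc]; ring
    · simp [hc]
  rw [Finset.sum_congr rfl fun z _ => this z, Finset.sum_comm]
  refine Finset.sum_congr rfl fun c _ => ?_
  rw [hsum0 (c i) (fun _ => F c * h (c i))]

end Helpers
section GraphLemmas

lemma cross_lemma {V : Type*} [DecidableEq V] (G : SimpleGraph V) (S : Finset V) :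
    ∀ {u w : V}, G.Walk u w → u ∈ S → w ∉ S → ∃ a ∈ S, ∃ b, b ∉ S ∧ G.Adj a b := by
  intro u w W
  induction W with
  | nil => intro hu hw; exact absurd hu hw
  | @cons u x w h W ih =>
    intro hu hw
    by_cases hx : x ∈ S
    · exact ih hx hw
    · exact ⟨u, hu, x, hx, h⟩

lemma exists_order {n : ℕ} (hn : 1 ≤ n) (G : SimpleGraph (Fin n)) (hG : G.Connected) :
    ∃ v : ℕ → Fin n, (∀ s t, s < n → t < n → v s = v t → s = t) ∧
      (∀ i : Fin n, ∃ s, s < n ∧ v s = i) ∧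
      (∀ t, 1 ≤ t → t < n → ∃ s, s < t ∧ G.Adj (v s) (v t)) := by
  classical
  set d : Fin n := ⟨0, hn⟩ with hd
  have main : ∀ k, 1 ≤ k → k ≤ n → ∃ l : List (Fin n), l.length = k ∧ l.Nodup ∧
      ∀ t, 1 ≤ t → t < k → ∃ s, s < t ∧ G.Adj (l.getD s d) (l.getD t d) := by
    intro k
    induction k with
    | zero => omega
    | succ k ih =>
      intro _ hkn
      by_cases hk1 : k = 0
      · subst hk1
        exact ⟨[d], rfl, List.nodup_singleton d, by omega⟩
      · obtain ⟨l, hlen, hnd, hprop⟩ := ih (by omega) (by omega)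
        -- find a vertex outside l adjacent to one inside
        have hScard : l.toFinset.card = k := by
          rw [List.toFinset_card_of_nodup hnd, hlen]
        have hcompl : (l.toFinsetᶜ : Finset (Fin n)).Nonempty := by
          rw [← Finset.card_pos, Finset.card_compl, hScard]
          simp only [Fintype.card_fin]
          omega
        obtain ⟨w, hw⟩ := hcompl
        have hwS : w ∉ l.toFinset := Finset.mem_compl.mp hw
        have hlne : l ≠ [] := by
          intro h; rw [h] at hlen; simp at hlen; omega
        have huS : l.getD 0 d ∈ l.toFinset := by
          rw [List.getD_eq_getElem l d (by omega)]
          exact List.mem_toFinset.mpr (List.getElem_mem _)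
        obtain ⟨W⟩ := hG.preconnected (l.getD 0 d) w
        obtain ⟨a, haS, b, hbS, hab⟩ := cross_lemma G l.toFinset W huS hwS
        refine ⟨l ++ [b], by simp [hlen], ?_, ?_⟩
        · rw [List.nodup_append]
          exact ⟨hnd, List.nodup_singleton b,
            by intro x hx y hy hxy; simp at hy; subst hy; subst hxy; exact hbS (List.mem_toFinset.mpr hx)⟩
        · intro t ht1 htk
          by_cases htk' : t < k
          · obtain ⟨s, hs, hadj⟩ := hprop t ht1 htk'
            refine ⟨s, hs, ?_⟩
            rw [List.getD_append _ _ _ _ (by omega), List.getD_append _ _ _ _ (by omega)]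
            exact hadj
          · have ht : t = k := by omega
            subst ht
            obtain ⟨s, hs, hsa⟩ := List.mem_iff_getElem.mp (List.mem_toFinset.mp haS)
            refine ⟨s, by omega, ?_⟩
            have h1 : (l ++ [b]).getD s d = a := by
              rw [List.getD_append _ _ _ _ (by omega), List.getD_eq_getElem l d (by omega)]
              exact hsa
            have h2 : (l ++ [b]).getD t d = b := by
              rw [List.getD_eq_getElem _ d (by simp; omega)]
              rw [List.getElem_append_right (by omega)]
              simp [hlen]
            rw [h1, h2]
            exact hab
  obtain ⟨l, hlen, hnd, hprop⟩ := main n hn le_rfl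
  refine ⟨fun s => l.getD s d, ?_, ?_, hprop⟩
  · intro s t hs ht hst
    simp only at hst
    have h1 : l.getD s d = l[s]'(by omega) := List.getD_eq_getElem l d (by omega)
    have h2 : l.getD t d = l[t]'(by omega) := List.getD_eq_getElem l d (by omega)
    rw [h1, h2] at hst
    exact (List.Nodup.getElem_inj_iff hnd).mp hst
  · intro i
    have hmem : i ∈ l := by
      have : l.toFinset = Finset.univ := by
        apply Finset.eq_univ_of_card
        rw [List.toFinset_card_of_nodup hnd, hlen, Fintype.card_fin]
      rw [← List.mem_toFinset, this]
      exact Finset.mem_univ i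
    obtain ⟨s, hs, hsi⟩ := List.mem_iff_getElem.mp hmem
    exact ⟨s, by omega, by simp only; rw [List.getD_eq_getElem l d (by omega)]; exact hsi⟩

lemma edges_covered {n : ℕ} (G : SimpleGraph (Fin n)) (hT : G.IsTree)
    (v : ℕ → Fin n) (hvinj : ∀ s t, s < n → t < n → v s = v t → s = t)
    (par : ℕ → ℕ)
    (hpar : ∀ t, 1 ≤ t → t < n → par t < t ∧ G.Adj (v (par t)) (v t)) :
    ∀ i j : Fin n, G.Adj i j → ∃ t, 1 ≤ t ∧ t < n ∧
      ((i = v (par t) ∧ j = v t) ∨ (j = v (par t) ∧ i = v t)) := by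
  classical
  have hn : 1 ≤ n := by
    rcases Nat.eq_zero_or_pos n with h | h
    · subst h
      obtain ⟨x⟩ := hT.isConnected.nonempty
      exact (Fin.elim0 x)
    · exact h
  set Φ : ℕ → Sym2 (Fin n) := fun t => s(v (par t), v t) with hΦ
  have hsub : (Finset.Ico 1 n).image Φ ⊆ G.edgeFinset := by
    intro e he
    obtain ⟨t, ht, rfl⟩ := Finset.mem_image.mp he
    rw [Finset.mem_Ico] at ht
    exact SimpleGraph.mem_edgeFinset.mpr ((hpar t ht.1 ht.2).2)
  have hinjOn : Set.InjOn Φ (Finset.Ico 1 n) := by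
    intro t ht t' ht' heq
    simp only [Finset.coe_Ico, Set.mem_Ico] at ht ht'
    have h1 := (hpar t ht.1 ht.2).1
    have h1' := (hpar t' ht'.1 ht'.2).1
    rw [hΦ] at heq
    simp only [Sym2.eq_iff] at heq
    rcases heq with ⟨_, h⟩ | ⟨ha, hb⟩
    · exact hvinj t t' ht.2 ht'.2 h
    · have e1 : par t = t' := hvinj _ _ (by omega) ht'.2 ha
      have e2 : par t' = t := hvinj _ _ (by omega) ht.2 hb.symm
      omega
  have hcardE : G.edgeFinset.card = n - 1 := by
    have := hT.card_edgeFinset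
    rw [Fintype.card_fin] at this
    omega
  have hcardI : ((Finset.Ico 1 n).image Φ).card = n - 1 := by
    rw [Finset.card_image_of_injOn hinjOn, Nat.card_Ico]
  have heq : (Finset.Ico 1 n).image Φ = G.edgeFinset :=
    Finset.eq_of_subset_of_card_le hsub (by omega)
  intro i j hij
  have : s(i, j) ∈ (Finset.Ico 1 n).image Φ := by
    rw [heq]; exact SimpleGraph.mem_edgeFinset.mpr hij
  obtain ⟨t, ht, hte⟩ := Finset.mem_image.mp this
  rw [Finset.mem_Ico] at ht
  rw [hΦ] at hte
  simp only [Sym2.eq_iff] at hte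
  refine ⟨t, ht.1, ht.2, ?_⟩
  rcases hte with ⟨h1, h2⟩ | ⟨h1, h2⟩
  · exact Or.inl ⟨h1.symm, h2.symm⟩
  · exact Or.inr ⟨h1.symm, h2.symm⟩

end GraphLemmas
section Glue

def glueTheta {n : ℕ} (C : Fin n → Finset ℝ)
    (p : (i : Fin n) → {x : ℝ // x ∈ C i} → ℝ)
    (q : (i j : Fin n) → ({x : ℝ // x ∈ C i} × {y : ℝ // y ∈ C j}) → ℝ)
    (v : ℕ → Fin n) (par : ℕ → ℕ) : ℕ → Pt C → ℝ
  | 0, c => p (v 0) (c (v 0))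
  | (t+1), c => glueTheta C p q v par t c *
      (q (v (par (t+1))) (v (t+1)) (c (v (par (t+1))), c (v (t+1)))
        / p (v (par (t+1))) (c (v (par (t+1)))))

lemma glueTheta_ign {n : ℕ} {C : Fin n → Finset ℝ}
    {p : (i : Fin n) → {x : ℝ // x ∈ C i} → ℝ}
    {q : (i j : Fin n) → ({x : ℝ // x ∈ C i} × {y : ℝ // y ∈ C j}) → ℝ}
    {v : ℕ → Fin n} {par : ℕ → ℕ} {t : ℕ} {i : Fin n}
    (hpar : ∀ s, 1 ≤ s → s ≤ t → par s < s)
    (hne : ∀ s, s ≤ t → v s ≠ i) (c : Pt C) (x : {x : ℝ // x ∈ C i}) :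
    glueTheta C p q v par t (Function.update c i x) = glueTheta C p q v par t c := by
  induction t with
  | zero =>
    simp only [glueTheta]
    rw [Function.update_of_ne (hne 0 le_rfl)]
  | succ t ih =>
    simp only [glueTheta]
    have h1 : v (par (t+1)) ≠ i :=
      hne (par (t+1)) (by have := hpar (t+1) (by omega) le_rfl; omega)
    have h2 : v (t+1) ≠ i := hne (t+1) le_rfl
    rw [Function.update_of_ne h1, Function.update_of_ne h2,
      ih (fun s hs1 hs2 => hpar s hs1 (by omega)) (fun s hs => hne s (by omega))]

lemma glue_inv {n : ℕ} (hn : 1 ≤ n) {C : Fin n → Finset ℝ} (hC : ∀ i, (C i).Nonempty)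
    (G : SimpleGraph (Fin n))
    (p : (i : Fin n) → {x : ℝ // x ∈ C i} → ℝ)
    (q : (i j : Fin n) → ({x : ℝ // x ∈ C i} × {y : ℝ // y ∈ C j}) → ℝ)
    (hp0 : ∀ i x, 0 ≤ p i x)
    (hq0 : ∀ i j, G.Adj i j → ∀ z, 0 ≤ q i j z)
    (hrow : ∀ i j, G.Adj i j → ∀ x, ∑ y, q i j (x, y) = p i x)
    (hcol : ∀ i j, G.Adj i j → ∀ y, ∑ x, q i j (x, y) = p j y)
    (v : ℕ → Fin n)
    (hvinj : ∀ s t, s < n → t < n → v s = v t → s = t)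
    (hvsurj : ∀ i : Fin n, ∃ s, s < n ∧ v s = i)
    (par : ℕ → ℕ)
    (hpar : ∀ t, 1 ≤ t → t < n → par t < t ∧ G.Adj (v (par t)) (v t))
    (t : ℕ) (ht : t < n) :
    (∀ c, 0 ≤ glueTheta C p q v par t c) ∧
    (∀ s, s ≤ t → ∀ x, (∑ c : Pt C, if c (v s) = x then glueTheta C p q v par t c else 0)
        = (∏ r ∈ Finset.Ico (t+1) n, ((C (v r)).card : ℝ)) * p (v s) x) ∧
    (∀ s, 1 ≤ s → s ≤ t → ∀ x y,
      (∑ c : Pt C, if c (v (par s)) = x ∧ c (v s) = y then glueTheta C p q v par t c else 0)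
        = (∏ r ∈ Finset.Ico (t+1) n, ((C (v r)).card : ℝ)) * q (v (par s)) (v s) (x, y)) := by
  classical
  induction t with
  | zero =>
    refine ⟨fun c => hp0 _ _, ?_, by omega⟩
    intro s hs x
    have hs0 : s = 0 := by omega
    subst hs0
    have hcardPt : ((Fintype.card (Pt C) : ℝ))
        = ∏ r ∈ Finset.range n, ((C (v r)).card : ℝ) := by
      have h1 : Fintype.card (Pt C) = ∏ j : Fin n, (C j).card := by
        rw [Fintype.card_pi]
        exact Finset.prod_congr rfl fun j _ => Fintype.card_coe (C j)
      rw [h1]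
      push_cast
      refine (Finset.prod_bij (fun (r : ℕ) (hr : r ∈ Finset.range n) => v r) ?_ ?_ ?_ ?_).symm
      · intro r hr; exact Finset.mem_univ _
      · intro r hr r' hr' h
        exact hvinj r r' (Finset.mem_range.mp hr) (Finset.mem_range.mp hr') h
      · intro j _
        obtain ⟨s, hs', rfl⟩ := hvsurj j
        exact ⟨s, Finset.mem_range.mpr hs', rfl⟩
      · intro r hr; rfl
    have hu : (0 : ℝ) < ((C (v 0)).card : ℝ) := by
      exact_mod_cast Finset.card_pos.mpr (hC (v 0))
    apply mul_left_cancel₀ (ne_of_gt hu)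
    have hkey := key_split (C := C) (v 0) (fun _ => (1:ℝ))
      (fun c => if c (v 0) = x then p (v 0) (c (v 0)) else 0) (fun c y => rfl)
    simp only [one_mul] at hkey
    calc ((C (v 0)).card : ℝ) *
          ∑ c : Pt C, (if c (v 0) = x then glueTheta C p q v par 0 c else 0)
        = ((C (v 0)).card : ℝ) *
          ∑ c : Pt C, (if c (v 0) = x then p (v 0) (c (v 0)) else 0) := by
          simp only [glueTheta]
      _ = ∑ c : Pt C, ∑ w, (if (Function.update c (v 0) w) (v 0) = x
            then p (v 0) ((Function.update c (v 0) w) (v 0)) else 0) := hkey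
      _ = ∑ _c : Pt C, p (v 0) x := by
          refine Finset.sum_congr rfl fun c _ => ?_
          have hw : ∀ w, (if (Function.update c (v 0) w) (v 0) = x
              then p (v 0) ((Function.update c (v 0) w) (v 0)) else 0)
              = (if w = x then p (v 0) w else 0) := by
            intro w; rw [Function.update_self]
          rw [Finset.sum_congr rfl (fun w _ => hw w), hsum0' x (fun w => p (v 0) w)]
      _ = (Fintype.card (Pt C) : ℝ) * p (v 0) x := by
          rw [Finset.sum_const, Finset.card_univ, nsmul_eq_mul]
      _ = ((C (v 0)).card : ℝ) *
            ((∏ r ∈ Finset.Ico 1 n, ((C (v r)).card : ℝ)) * p (v 0) x) := by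
          rw [hcardPt, Finset.range_eq_Ico, Finset.prod_eq_prod_Ico_succ_bot hn]
          ring
  | succ t ih =>
    have htn : t < n := by omega
    obtain ⟨ihpos, ihuni, ihbi⟩ := ih htn
    have hpt := hpar (t+1) (by omega) ht
    obtain ⟨hptlt, hAdj⟩ := hpt
    have hνne : ∀ s, s ≤ t → v s ≠ v (t+1) := by
      intro s hs h
      have := hvinj s (t+1) (by omega) ht h
      omega
    have hπν : v (par (t+1)) ≠ v (t+1) := hνne (par (t+1)) (by omega)
    have hign : ∀ (c : Pt C) x,
        glueTheta C p q v par t (Function.update c (v (t+1)) x) = glueTheta C p q v par t c :=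
      glueTheta_ign (fun s h1 h2 => (hpar s h1 (by omega)).1) hνne
    have hu : (0:ℝ) < ((C (v (t+1))).card : ℝ) := by
      exact_mod_cast Finset.card_pos.mpr (hC (v (t+1)))
    have hNstep : (∏ r ∈ Finset.Ico (t+1) n, ((C (v r)).card : ℝ))
        = ((C (v (t+1))).card : ℝ) * ∏ r ∈ Finset.Ico (t+2) n, ((C (v r)).card : ℝ) :=
      Finset.prod_eq_prod_Ico_succ_bot ht _
    have hvanish : ∀ c : Pt C, p (v (par (t+1))) (c (v (par (t+1)))) = 0 →
        glueTheta C p q v par t c = 0 := by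
      intro c hp
      have h0 := ihuni (par (t+1)) (by omega) (c (v (par (t+1))))
      rw [hp, mul_zero] at h0
      have hnn : ∀ c' : Pt C, c' ∈ Finset.univ →
          0 ≤ (if c' (v (par (t+1))) = c (v (par (t+1))) then glueTheta C p q v par t c' else 0) := by
        intro c' _
        by_cases h : c' (v (par (t+1))) = c (v (par (t+1)))
        · rw [if_pos h]; exact ihpos c'
        · rw [if_neg h]
      have hall := (Finset.sum_eq_zero_iff_of_nonneg hnn).mp h0 c (Finset.mem_univ c)
      simpa using hall
    have hqvan : ∀ z y, p (v (par (t+1))) z = 0 → q (v (par (t+1))) (v (t+1)) (z, y) = 0 := by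
      intro z y hz
      have h0 := hrow _ _ hAdj z
      rw [hz] at h0
      exact (Finset.sum_eq_zero_iff_of_nonneg
        (fun y' _ => hq0 _ _ hAdj (z, y'))).mp h0 y (Finset.mem_univ y)
    have hΘsucc : ∀ c : Pt C, glueTheta C p q v par (t+1) c
        = glueTheta C p q v par t c *
          (q (v (par (t+1))) (v (t+1)) (c (v (par (t+1))), c (v (t+1)))
            / p (v (par (t+1))) (c (v (par (t+1))))) := fun c => rfl
    have hpos1 : ∀ c, 0 ≤ glueTheta C p q v par (t+1) c := fun c =>
      mul_nonneg (ihpos c) (div_nonneg (hq0 _ _ hAdj _) (hp0 _ _))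
    -- engine for conditions not involving coordinate v (t+1)
    have old : ∀ (P : Pt C → Prop) (_inst : DecidablePred P),
        (∀ (c : Pt C) (x : {x : ℝ // x ∈ C (v (t+1))}),
          P (Function.update c (v (t+1)) x) ↔ P c) →
        ((C (v (t+1))).card : ℝ) * (∑ c : Pt C, if P c then glueTheta C p q v par (t+1) c else 0)
          = ∑ c : Pt C, (if P c then glueTheta C p q v par t c else 0) := by
      intro P inst hP
      have h1 : ∀ c : Pt C, (if P c then glueTheta C p q v par (t+1) c else 0)
          = (if P c then glueTheta C p q v par t c else 0) *
            (q (v (par (t+1))) (v (t+1)) (c (v (par (t+1))), c (v (t+1)))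
              / p (v (par (t+1))) (c (v (par (t+1))))) := by
        intro c; by_cases h : P c
        · rw [if_pos h, if_pos h, hΘsucc]
        · rw [if_neg h, if_neg h, zero_mul]
      rw [Finset.sum_congr rfl (fun c _ => h1 c)]
      have hFign : ∀ (c : Pt C) x,
          (if P (Function.update c (v (t+1)) x)
            then glueTheta C p q v par t (Function.update c (v (t+1)) x) else 0)
          = (if P c then glueTheta C p q v par t c else 0) := by
        intro c x
        rw [hign]
        exact if_congr (hP c x) rfl rfl
      rw [key_split (v (t+1)) _ _ hFign]
      refine Finset.sum_congr rfl fun c _ => ?_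
      have h2 : ∀ x, q (v (par (t+1))) (v (t+1))
            ((Function.update c (v (t+1)) x) (v (par (t+1))), (Function.update c (v (t+1)) x) (v (t+1)))
            / p (v (par (t+1))) ((Function.update c (v (t+1)) x) (v (par (t+1))))
          = q (v (par (t+1))) (v (t+1)) (c (v (par (t+1))), x)
            / p (v (par (t+1))) (c (v (par (t+1)))) := by
        intro x
        rw [Function.update_self, Function.update_of_ne hπν]
      rw [Finset.sum_congr rfl (fun x _ => h2 x), ← Finset.sum_div, hrow _ _ hAdj]
      by_cases hz : p (v (par (t+1))) (c (v (par (t+1)))) = 0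
      · rw [hz, div_zero, mul_zero]
        by_cases h : P c
        · rw [if_pos h, hvanish c hz]
        · rw [if_neg h]
      · rw [div_self hz, mul_one]
    refine ⟨hpos1, ?_, ?_⟩
    · -- univariate marginals
      intro s hs x
      rcases Nat.lt_or_ge s (t+1) with hst | hst
      · have hP : ∀ (c : Pt C) (w : {x : ℝ // x ∈ C (v (t+1))}),
            (Function.update c (v (t+1)) w) (v s) = x ↔ c (v s) = x := by
          intro c w; rw [Function.update_of_ne (hνne s (by omega))]
        have h := old (fun c => c (v s) = x) (fun c => inferInstance) hP
        apply mul_left_cancel₀ (ne_of_gt hu)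
        rw [h, ihuni s (by omega) x, hNstep]
        ring
      · have hs1 : s = t+1 := by omega
        subst hs1
        apply mul_left_cancel₀ (ne_of_gt hu)
        have h1 : ∀ c : Pt C, (if c (v (t+1)) = x then glueTheta C p q v par (t+1) c else 0)
            = glueTheta C p q v par t c *
              (if c (v (t+1)) = x then
                q (v (par (t+1))) (v (t+1)) (c (v (par (t+1))), c (v (t+1)))
                  / p (v (par (t+1))) (c (v (par (t+1)))) else 0) := by
          intro c; by_cases h : c (v (t+1)) = x
          · rw [if_pos h, if_pos h, hΘsucc]
          · rw [if_neg h, if_neg h, mul_zero]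
        rw [Finset.sum_congr rfl (fun c _ => h1 c),
          key_split (v (t+1)) (fun c => glueTheta C p q v par t c) _ hign]
        have h2 : ∀ c : Pt C,
            (∑ w, if (Function.update c (v (t+1)) w) (v (t+1)) = x then
              q (v (par (t+1))) (v (t+1))
                ((Function.update c (v (t+1)) w) (v (par (t+1))),
                  (Function.update c (v (t+1)) w) (v (t+1)))
                / p (v (par (t+1))) ((Function.update c (v (t+1)) w) (v (par (t+1)))) else 0)
            = q (v (par (t+1))) (v (t+1)) (c (v (par (t+1))), x)
                / p (v (par (t+1))) (c (v (par (t+1)))) := by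
          intro c
          have hw : ∀ w, (if (Function.update c (v (t+1)) w) (v (t+1)) = x then
              q (v (par (t+1))) (v (t+1))
                ((Function.update c (v (t+1)) w) (v (par (t+1))),
                  (Function.update c (v (t+1)) w) (v (t+1)))
                / p (v (par (t+1))) ((Function.update c (v (t+1)) w) (v (par (t+1)))) else 0)
              = (if w = x then q (v (par (t+1))) (v (t+1)) (c (v (par (t+1))), w)
                  / p (v (par (t+1))) (c (v (par (t+1)))) else 0) := by
            intro w
            rw [Function.update_self, Function.update_of_ne hπν]
          rw [Finset.sum_congr rfl (fun w _ => hw w),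
            hsum0' x (fun w => q (v (par (t+1))) (v (t+1)) (c (v (par (t+1))), w)
              / p (v (par (t+1))) (c (v (par (t+1)))))]
        rw [Finset.sum_congr rfl (fun c _ => by rw [h2 c]),
          sum_fiber (v (par (t+1))) (fun c => glueTheta C p q v par t c)
            (fun z => q (v (par (t+1))) (v (t+1)) (z, x) / p (v (par (t+1))) z),
          Finset.sum_congr rfl (fun z _ => by rw [ihuni (par (t+1)) (by omega) z])]
        have h3 : ∀ z, (q (v (par (t+1))) (v (t+1)) (z, x) / p (v (par (t+1))) z) *
              ((∏ r ∈ Finset.Ico (t+1) n, ((C (v r)).card : ℝ)) * p (v (par (t+1))) z)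
            = (∏ r ∈ Finset.Ico (t+1) n, ((C (v r)).card : ℝ)) *
              q (v (par (t+1))) (v (t+1)) (z, x) := by
          intro z
          by_cases hz : p (v (par (t+1))) z = 0
          · rw [hz, hqvan z x hz]; simp
          · rw [div_mul_eq_mul_div, div_eq_iff hz]; ring
        rw [Finset.sum_congr rfl (fun z _ => h3 z), ← Finset.mul_sum, hcol _ _ hAdj x, hNstep]
        ring
    · -- bivariate marginals
      intro s hs1 hs2 x y
      rcases Nat.lt_or_ge s (t+1) with hst | hst
      · have hps : par s < s := (hpar s hs1 (by omega)).1
        have hP : ∀ (c : Pt C) (w : {x : ℝ // x ∈ C (v (t+1))}),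
            ((Function.update c (v (t+1)) w) (v (par s)) = x ∧
              (Function.update c (v (t+1)) w) (v s) = y) ↔ (c (v (par s)) = x ∧ c (v s) = y) := by
          intro c w
          rw [Function.update_of_ne (hνne (par s) (by omega)),
            Function.update_of_ne (hνne s (by omega))]
        have h := old (fun c => c (v (par s)) = x ∧ c (v s) = y) (fun c => inferInstance) hP
        apply mul_left_cancel₀ (ne_of_gt hu)
        rw [h, ihbi s hs1 (by omega) x y, hNstep]
        ring
      · have hs3 : s = t+1 := by omega
        subst hs3
        apply mul_left_cancel₀ (ne_of_gt hu)
        have h1 : ∀ c : Pt C,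
            (if (c (v (par (t+1))) = x ∧ c (v (t+1)) = y)
              then glueTheta C p q v par (t+1) c else 0)
            = (if c (v (par (t+1))) = x then glueTheta C p q v par t c else 0) *
              (if c (v (t+1)) = y then
                q (v (par (t+1))) (v (t+1)) (x, y) / p (v (par (t+1))) x else 0) := by
          intro c
          by_cases ha : c (v (par (t+1))) = x
          · by_cases hb : c (v (t+1)) = y
            · rw [if_pos ⟨ha, hb⟩, if_pos ha, if_pos hb, hΘsucc, ha, hb]
            · rw [if_neg (fun h => hb h.2), if_neg hb, mul_zero]
          · rw [if_neg (fun h => ha h.1), if_neg ha, zero_mul]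
        have hFign : ∀ (c : Pt C) (w : {x : ℝ // x ∈ C (v (t+1))}),
            (if (Function.update c (v (t+1)) w) (v (par (t+1))) = x
              then glueTheta C p q v par t (Function.update c (v (t+1)) w) else 0)
            = (if c (v (par (t+1))) = x then glueTheta C p q v par t c else 0) := by
          intro c w
          rw [hign, Function.update_of_ne hπν]
        rw [Finset.sum_congr rfl (fun c _ => h1 c), key_split (v (t+1)) _ _ hFign]
        have h2 : ∀ c : Pt C,
            (∑ w, if (Function.update c (v (t+1)) w) (v (t+1)) = y then
              q (v (par (t+1))) (v (t+1)) (x, y) / p (v (par (t+1))) x else 0)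
            = q (v (par (t+1))) (v (t+1)) (x, y) / p (v (par (t+1))) x := by
          intro c
          have hw : ∀ w, (if (Function.update c (v (t+1)) w) (v (t+1)) = y then
              q (v (par (t+1))) (v (t+1)) (x, y) / p (v (par (t+1))) x else 0)
              = (if w = y then q (v (par (t+1))) (v (t+1)) (x, y) / p (v (par (t+1))) x else 0) := by
            intro w; rw [Function.update_self]
          rw [Finset.sum_congr rfl (fun w _ => hw w),
            hsum0' y (fun _ => q (v (par (t+1))) (v (t+1)) (x, y) / p (v (par (t+1))) x)]
        rw [Finset.sum_congr rfl (fun c _ => by rw [h2 c]), ← Finset.sum_mul,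
          ihuni (par (t+1)) (by omega) x]
        by_cases hz : p (v (par (t+1))) x = 0
        · rw [hz, hqvan x y hz]
          simp
        · rw [hNstep]
          rw [mul_assoc _ (p _ x), mul_div_assoc', mul_div_cancel_left₀ _ hz]
          exact mul_assoc _ _ _

end Glue
lemma glue_exists {n : ℕ} (hn : 2 ≤ n) {C : Fin n → Finset ℝ} (hC : ∀ i, (C i).Nonempty)
    (G : SimpleGraph (Fin n)) (hT : G.IsTree)
    (p : (i : Fin n) → {x : ℝ // x ∈ C i} → ℝ)
    (q : (i j : Fin n) → ({x : ℝ // x ∈ C i} × {y : ℝ // y ∈ C j}) → ℝ)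
    (hq0 : ∀ i j, G.Adj i j → ∀ z, 0 ≤ q i j z)
    (hrow : ∀ i j, G.Adj i j → ∀ x, ∑ y, q i j (x, y) = p i x)
    (hcol : ∀ i j, G.Adj i j → ∀ y, ∑ x, q i j (x, y) = p j y)
    (hsym : ∀ i j, G.Adj i j → ∀ x y, q i j (x, y) = q j i (y, x)) :
    ∃ θ : Pt C → ℝ, (∀ c, 0 ≤ θ c) ∧ (∀ i, projUni θ i = p i) ∧
      (∀ i j, G.Adj i j → projBi θ i j = q i j) := by
  classical
  have hn1 : 1 ≤ n := by omega
  -- every vertex has a neighbor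
  have hnbr : ∀ i : Fin n, ∃ j, G.Adj i j := by
    intro i
    have : ∃ w : Fin n, w ≠ i := by
      refine ⟨if h : i = ⟨0, by omega⟩ then ⟨1, by omega⟩ else ⟨0, by omega⟩, ?_⟩
      split_ifs with h
      · subst h; intro hh; simp [Fin.ext_iff] at hh
      · exact fun hh => h hh.symm
    obtain ⟨w, hw⟩ := this
    obtain ⟨W⟩ := hT.isConnected.preconnected i w
    obtain ⟨a, ha, b, hb, hab⟩ := cross_lemma G {i} W (Finset.mem_singleton_self i)
      (by simp [hw])
    rw [Finset.mem_singleton] at ha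
    exact ⟨b, ha ▸ hab⟩
  have hp0 : ∀ i x, 0 ≤ p i x := by
    intro i x
    obtain ⟨j, hj⟩ := hnbr i
    rw [← hrow i j hj x]
    exact Finset.sum_nonneg fun y _ => hq0 i j hj (x, y)
  obtain ⟨v, hvinj, hvsurj, hvord⟩ := exists_order hn1 G hT.isConnected
  set par : ℕ → ℕ := fun t => if h : 1 ≤ t ∧ t < n then (hvord t h.1 h.2).choose else 0
    with hpardef
  have hpar : ∀ t, 1 ≤ t → t < n → par t < t ∧ G.Adj (v (par t)) (v t) := by
    intro t h1 h2
    have := (hvord t h1 h2).choose_spec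
    rw [hpardef]
    simp only [dif_pos (And.intro h1 h2)]
    exact this
  have hinv := glue_inv hn1 hC G p q hp0 hq0 hrow hcol v hvinj hvsurj par hpar (n-1)
    (by omega)
  obtain ⟨hpos, huni, hbi⟩ := hinv
  have hN : (∏ r ∈ Finset.Ico (n-1+1) n, ((C (v r)).card : ℝ)) = 1 := by
    have : n - 1 + 1 = n := by omega
    rw [this, Finset.Ico_self, Finset.prod_empty]
  rw [hN] at huni hbi
  refine ⟨glueTheta C p q v par (n-1), hpos, ?_, ?_⟩
  · intro i
    funext x
    obtain ⟨s, hs, rfl⟩ := hvsurj i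
    have := huni s (by omega) x
    rw [one_mul] at this
    exact this
  · intro i j hij
    obtain ⟨t, ht1, ht2, hcase⟩ := edges_covered G hT v hvinj par hpar i j hij
    funext z
    obtain ⟨x, y⟩ := z
    rcases hcase with ⟨hi, hj⟩ | ⟨hj, hi⟩
    · subst hi; subst hj
      have := hbi t ht1 (by omega) x y
      rw [one_mul] at this
      exact this
    · subst hi; subst hj
      -- i = v t, j = v (par t)
      have := hbi t ht1 (by omega) y x
      rw [one_mul] at this
      have hswap : projBi (glueTheta C p q v par (n-1)) (v t) (v (par t)) (x, y)
          = ∑ c : Pt C, if c (v (par t)) = y ∧ c (v t) = x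
              then glueTheta C p q v par (n-1) c else 0 := by
        unfold projBi
        refine Finset.sum_congr rfl fun c _ => ?_
        exact if_congr (by constructor <;> exact fun h => ⟨h.2, h.1⟩) rfl rfl
      rw [hswap, this, hsym _ _ ((hpar t ht1 ht2).2) y x]
lemma sum_if_const {S : Type*} [Fintype S] (P : Prop) [Decidable P] (f : S → ℝ) :
    ∑ s : S, (if P then f s else 0) = if P then ∑ s : S, f s else 0 := by
  by_cases h : P <;> simp [h]

lemma psi_max {n : ℕ} {C : Fin n → Finset ℝ} {K : ℕ} (hK : 1 ≤ K)
    (a : Fin K → Fin n → ℝ) (b : Fin K → ℝ) (c : Pt C) :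
    ∃ k : Fin K, psi a b c = (∑ i, a k i * (c i : ℝ) + b k) ∧
      ∀ k', (∑ i, a k' i * (c i : ℝ) + b k') ≤ (∑ i, a k i * (c i : ℝ) + b k) := by
  have : Nonempty (Fin K) := ⟨⟨0, hK⟩⟩
  obtain ⟨k, hk⟩ := Finite.exists_max (fun k : Fin K => ∑ i, a k i * (c i : ℝ) + b k)
  refine ⟨k, ?_, hk⟩
  unfold psi
  apply le_antisymm
  · exact ciSup_le hk
  · exact le_ciSup (f := fun k : Fin K => ∑ i, a k i * (c i : ℝ) + b k)
      (Set.Finite.bddAbove (Set.finite_range _)) k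

lemma easy_dir {n : ℕ} {C : Fin n → Finset ℝ}
    {E : Finset (Fin n × Fin n)}
    {μU : (i : Fin n) → {x : ℝ // x ∈ C i} → ℝ}
    {μB : (i j : Fin n) → ({x : ℝ // x ∈ C i} × {y : ℝ // y ∈ C j}) → ℝ}
    {ρ : ℝ} {θ : Pt C → ℝ} (hθ : InTheta E μU μB ρ θ)
    {K : ℕ} (hK : 1 ≤ K) (a : Fin K → Fin n → ℝ) (b : Fin K → ℝ) :
    ∃ (w : Fin K → ℝ)
      (v1 : (k : Fin K) → (i : Fin n) → {x : ℝ // x ∈ C i} → ℝ)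
      (v2 : (k : Fin K) → (i j : Fin n) →
        ({x : ℝ // x ∈ C i} × {y : ℝ // y ∈ C j}) → ℝ),
      (∀ k, 0 ≤ w k) ∧ (∑ k, w k = 1) ∧
      (∀ k, ∀ i j, (i, j) ∈ E → ∀ p, 0 ≤ v2 k i j p) ∧
      (∀ k, ∀ i j, (i, j) ∈ E → ∀ x : {x : ℝ // x ∈ C i},
        ∑ y : {y : ℝ // y ∈ C j}, v2 k i j (x, y) = v1 k i x) ∧
      (∀ k, ∀ i j, (i, j) ∈ E → ∀ y : {y : ℝ // y ∈ C j},
        ∑ x : {x : ℝ // x ∈ C i}, v2 k i j (x, y) = v1 k j y) ∧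
      (∀ k, ∀ i, ∑ x : {x : ℝ // x ∈ C i}, v1 k i x = w k) ∧
      (∀ k, ∀ i j, (i, j) ∈ E →
        ∑ p : {x : ℝ // x ∈ C i} × {y : ℝ // y ∈ C j}, v2 k i j p = w k) ∧
      (∀ i, ∀ x : {x : ℝ // x ∈ C i}, ∑ k, v1 k i x = μU i x) ∧
      (∀ i j, (i, j) ∈ E →
        Vanishes (fun p => ∑ k, v2 k i j p) (μB i j) ∧
        KL (fun p => ∑ k, v2 k i j p) (μB i j) ≤ ρ) ∧
      (∑ c : Pt C, θ c * psi a b c)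
        = (∑ k, ∑ i, ∑ x : {x : ℝ // x ∈ C i}, (x : ℝ) * a k i * v1 k i x) +
          ∑ k, b k * w k := by
  classical
  obtain ⟨⟨hθ0, hθ1⟩, hθU, hθB⟩ := hθ
  set κ : Pt C → Fin K := fun c => (psi_max hK a b c).choose with hκdef
  have hκ1 : ∀ c, psi a b c = (∑ i, a (κ c) i * (c i : ℝ) + b (κ c)) :=
    fun c => (psi_max hK a b c).choose_spec.1
  refine ⟨fun k => ∑ c : Pt C, if κ c = k then θ c else 0,
    fun k i x => ∑ c : Pt C, if c i = x ∧ κ c = k then θ c else 0,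
    fun k i j z => ∑ c : Pt C, if c i = z.1 ∧ c j = z.2 ∧ κ c = k then θ c else 0,
    ?_, ?_, ?_, ?_, ?_, ?_, ?_, ?_, ?_, ?_⟩
  · intro k
    refine Finset.sum_nonneg fun c _ => ?_
    by_cases h : κ c = k
    · rw [if_pos h]; exact hθ0 c
    · rw [if_neg h]
  · rw [Finset.sum_comm, ← hθ1]
    exact Finset.sum_congr rfl fun c _ => hsum0 (κ c) (fun _ => θ c)
  · intro k i j _ z
    refine Finset.sum_nonneg fun c _ => ?_
    by_cases h : c i = z.1 ∧ c j = z.2 ∧ κ c = k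
    · rw [if_pos h]; exact hθ0 c
    · rw [if_neg h]
  · intro k i j _ x
    rw [Finset.sum_comm]
    refine Finset.sum_congr rfl fun c _ => ?_
    rw [Finset.sum_congr rfl (fun y _ =>
      if_congr (show (c i = x ∧ c j = y ∧ κ c = k) ↔ (c j = y ∧ (c i = x ∧ κ c = k)) by tauto)
        rfl rfl), hsum2 (c j) (c i = x ∧ κ c = k) (fun _ => θ c)]
  · intro k i j _ y
    rw [Finset.sum_comm]
    refine Finset.sum_congr rfl fun c _ => ?_
    rw [Finset.sum_congr rfl (fun x _ =>
      if_congr (show (c i = x ∧ c j = y ∧ κ c = k) ↔ (c i = x ∧ (c j = y ∧ κ c = k)) by tauto)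
        rfl rfl), hsum2 (c i) (c j = y ∧ κ c = k) (fun _ => θ c)]
  · intro k i
    rw [Finset.sum_comm]
    refine Finset.sum_congr rfl fun c _ => ?_
    exact hsum2 (c i) (κ c = k) (fun _ => θ c)
  · intro k i j _
    rw [Fintype.sum_prod_type]
    dsimp only
    rw [Finset.sum_congr rfl (fun x (_ : x ∈ Finset.univ) => Finset.sum_comm)]
    have hinner : ∀ (x : {x : ℝ // x ∈ C i}) (c : Pt C),
        (∑ y : {y : ℝ // y ∈ C j}, if c i = x ∧ c j = y ∧ κ c = k then θ c else 0)
        = if c i = x ∧ κ c = k then θ c else 0 := by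
      intro x c
      rw [Finset.sum_congr rfl (fun y _ =>
        if_congr (show (c i = x ∧ c j = y ∧ κ c = k) ↔ (c j = y ∧ (c i = x ∧ κ c = k)) by tauto)
          rfl rfl), hsum2 (c j) (c i = x ∧ κ c = k) (fun _ => θ c)]
    rw [Finset.sum_congr rfl (fun x (_ : x ∈ Finset.univ) => Finset.sum_congr rfl
      (fun c (_ : c ∈ Finset.univ) => hinner x c)), Finset.sum_comm]
    refine Finset.sum_congr rfl fun c _ => ?_
    exact hsum2 (c i) (κ c = k) (fun _ => θ c)
  · intro i x
    rw [Finset.sum_comm]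
    have : ∀ c : Pt C, (∑ k, if c i = x ∧ κ c = k then θ c else 0)
        = if c i = x then θ c else 0 := by
      intro c
      rw [Finset.sum_congr rfl (fun k _ =>
        if_congr (show (c i = x ∧ κ c = k) ↔ (κ c = k ∧ c i = x) by tauto) rfl rfl),
        hsum2 (κ c) (c i = x) (fun _ => θ c)]
    rw [Finset.sum_congr rfl fun c _ => this c]
    exact congrFun (hθU i) x
  · intro i j hij
    have hfun : (fun z : {x : ℝ // x ∈ C i} × {y : ℝ // y ∈ C j} =>
        ∑ k, ∑ c : Pt C, if c i = z.1 ∧ c j = z.2 ∧ κ c = k then θ c else 0)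
        = projBi θ i j := by
      funext z
      rw [Finset.sum_comm]
      unfold projBi
      refine Finset.sum_congr rfl fun c _ => ?_
      rw [Finset.sum_congr rfl (fun k _ =>
        if_congr (show (c i = z.1 ∧ c j = z.2 ∧ κ c = k)
          ↔ (κ c = k ∧ (c i = z.1 ∧ c j = z.2)) by tauto) rfl rfl),
        hsum2 (κ c) (c i = z.1 ∧ c j = z.2) (fun _ => θ c)]
    rw [hfun]
    exact hθB i j hij
  · -- value identity
    have hA : ∀ k i (x : {x : ℝ // x ∈ C i}),
        (x : ℝ) * a k i * (∑ c : Pt C, if c i = x ∧ κ c = k then θ c else 0)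
        = ∑ c : Pt C, (if c i = x ∧ κ c = k then (x : ℝ) * a k i * θ c else 0) := by
      intro k i x
      rw [Finset.mul_sum]
      exact Finset.sum_congr rfl fun c _ => by rw [mul_ite, mul_zero]
    calc ∑ c : Pt C, θ c * psi a b c
        = ∑ c : Pt C, ((∑ i, (c i : ℝ) * a (κ c) i * θ c) + b (κ c) * θ c) := by
          refine Finset.sum_congr rfl fun c _ => ?_
          rw [hκ1 c, mul_add, Finset.mul_sum]
          congr 1
          · exact Finset.sum_congr rfl fun i _ => by ring
          · ring
      _ = (∑ c : Pt C, ∑ i, (c i : ℝ) * a (κ c) i * θ c) + ∑ c : Pt C, b (κ c) * θ c :=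
          Finset.sum_add_distrib
      _ = (∑ c : Pt C, ∑ k, if κ c = k then ∑ i, (c i : ℝ) * a k i * θ c else 0)
            + ∑ c : Pt C, ∑ k, if κ c = k then b k * θ c else 0 := by
          congr 1
          · exact Finset.sum_congr rfl fun c _ =>
              (hsum0 (κ c) (fun k => ∑ i, (c i : ℝ) * a k i * θ c)).symm
          · exact Finset.sum_congr rfl fun c _ => (hsum0 (κ c) (fun k => b k * θ c)).symm
      _ = (∑ k, ∑ c : Pt C, if κ c = k then ∑ i, (c i : ℝ) * a k i * θ c else 0)
            + ∑ k, ∑ c : Pt C, if κ c = k then b k * θ c else 0 := by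
          congr 1 <;> exact Finset.sum_comm
      _ = (∑ k, ∑ i, ∑ x : {x : ℝ // x ∈ C i}, (x : ℝ) * a k i *
              (∑ c : Pt C, if c i = x ∧ κ c = k then θ c else 0)) +
          ∑ k, b k * (∑ c : Pt C, if κ c = k then θ c else 0) := by
          congr 1
          · refine Finset.sum_congr rfl fun k _ => ?_
            calc ∑ c : Pt C, (if κ c = k then ∑ i, (c i : ℝ) * a k i * θ c else 0)
                = ∑ c : Pt C, ∑ i, (if κ c = k then (c i : ℝ) * a k i * θ c else 0) := by
                  refine Finset.sum_congr rfl fun c _ => (sum_if_const _ _).symm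
              _ = ∑ i, ∑ c : Pt C, (if κ c = k then (c i : ℝ) * a k i * θ c else 0) :=
                  Finset.sum_comm
              _ = ∑ i, ∑ c : Pt C, ∑ x : {x : ℝ // x ∈ C i},
                    (if c i = x ∧ κ c = k then (x : ℝ) * a k i * θ c else 0) := by
                  refine Finset.sum_congr rfl fun i _ => Finset.sum_congr rfl fun c _ => ?_
                  exact (hsum2 (c i) (κ c = k) (fun x => (x : ℝ) * a k i * θ c)).symm
              _ = ∑ i, ∑ x : {x : ℝ // x ∈ C i}, ∑ c : Pt C,
                    (if c i = x ∧ κ c = k then (x : ℝ) * a k i * θ c else 0) :=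
                  Finset.sum_congr rfl fun i _ => Finset.sum_comm
              _ = ∑ i, ∑ x : {x : ℝ // x ∈ C i}, (x : ℝ) * a k i *
                    (∑ c : Pt C, if c i = x ∧ κ c = k then θ c else 0) :=
                  Finset.sum_congr rfl fun i _ => Finset.sum_congr rfl fun x _ =>
                    (hA k i x).symm
          · refine Finset.sum_congr rfl fun k _ => ?_
            rw [Finset.mul_sum]
            exact Finset.sum_congr rfl fun c _ => by rw [mul_ite, mul_zero]
lemma hard_dir {n : ℕ} (hn : 2 ≤ n) {C : Fin n → Finset ℝ} (hC : ∀ i, (C i).Nonempty)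
    {E : Finset (Fin n × Fin n)} (hE : IsTreeEdges E)
    {μU : (i : Fin n) → {x : ℝ // x ∈ C i} → ℝ}
    {μB : (i j : Fin n) → ({x : ℝ // x ∈ C i} × {y : ℝ // y ∈ C j}) → ℝ}
    {ρ : ℝ} {K : ℕ} (hK : 1 ≤ K) (a : Fin K → Fin n → ℝ) (b : Fin K → ℝ)
    (w : Fin K → ℝ)
    (v1 : (k : Fin K) → (i : Fin n) → {x : ℝ // x ∈ C i} → ℝ)
    (v2 : (k : Fin K) → (i j : Fin n) → ({x : ℝ // x ∈ C i} × {y : ℝ // y ∈ C j}) → ℝ)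
    (h1 : ∀ k, 0 ≤ w k) (h2 : ∑ k, w k = 1)
    (h3 : ∀ k, ∀ i j, (i, j) ∈ E → ∀ p, 0 ≤ v2 k i j p)
    (h4 : ∀ k, ∀ i j, (i, j) ∈ E → ∀ x : {x : ℝ // x ∈ C i},
      ∑ y : {y : ℝ // y ∈ C j}, v2 k i j (x, y) = v1 k i x)
    (h5 : ∀ k, ∀ i j, (i, j) ∈ E → ∀ y : {y : ℝ // y ∈ C j},
      ∑ x : {x : ℝ // x ∈ C i}, v2 k i j (x, y) = v1 k j y)
    (h6 : ∀ k, ∀ i, ∑ x : {x : ℝ // x ∈ C i}, v1 k i x = w k)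
    (h8 : ∀ i, ∀ x : {x : ℝ // x ∈ C i}, ∑ k, v1 k i x = μU i x)
    (h9 : ∀ i j, (i, j) ∈ E →
      Vanishes (fun p => ∑ k, v2 k i j p) (μB i j) ∧
      KL (fun p => ∑ k, v2 k i j p) (μB i j) ≤ ρ) :
    ∃ θ : Pt C → ℝ, InTheta E μU μB ρ θ ∧
      ((∑ k, ∑ i, ∑ x : {x : ℝ // x ∈ C i}, (x : ℝ) * a k i * v1 k i x) +
        ∑ k, b k * w k) ≤ ∑ c : Pt C, θ c * psi a b c := by
  classical
  obtain ⟨hlt, hT⟩ := hE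
  set G := treeGraph E with hG
  have hEne : ∀ {i j : Fin n}, (i, j) ∈ E → (j, i) ∉ E := by
    intro i j hij hji
    have h1' := hlt _ hij
    have h2' := hlt _ hji
    dsimp only at h1' h2'
    exact absurd h2' (lt_asymm h1')
  have hadj : ∀ i j, (i, j) ∈ E → G.Adj i j := by
    intro i j hij
    rw [hG, treeGraph, SimpleGraph.fromRel_adj]
    exact ⟨fun h => absurd (h ▸ hlt _ hij) (lt_irrefl _), Or.inl hij⟩
  have hadj' : ∀ i j, G.Adj i j → (i, j) ∈ E ∨ (j, i) ∈ E := by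
    intro i j h
    rw [hG, treeGraph, SimpleGraph.fromRel_adj] at h
    exact h.2
  -- symmetrized bivariate data for each k
  set q : Fin K → (i j : Fin n) → ({x : ℝ // x ∈ C i} × {y : ℝ // y ∈ C j}) → ℝ :=
    fun k i j z => if (i, j) ∈ E then v2 k i j z else v2 k j i (z.2, z.1) with hq
  have hglue : ∀ k, ∃ θk : Pt C → ℝ, (∀ c, 0 ≤ θk c) ∧ (∀ i, projUni θk i = v1 k i) ∧
      (∀ i j, G.Adj i j → projBi θk i j = q k i j) := by
    intro k
    refine glue_exists hn hC G hT (v1 k) (q k) ?_ ?_ ?_ ?_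
    · intro i j hij z
      rcases hadj' i j hij with h | h
      · simp only [hq, if_pos h]; exact h3 k i j h z
      · simp only [hq, if_neg (hEne h)]; exact h3 k j i h _
    · intro i j hij x
      rcases hadj' i j hij with h | h
      · simp only [hq, if_pos h]; exact h4 k i j h x
      · simp only [hq, if_neg (hEne h)]; exact h5 k j i h x
    · intro i j hij y
      rcases hadj' i j hij with h | h
      · simp only [hq, if_pos h]; exact h5 k i j h y
      · simp only [hq, if_neg (hEne h)]; exact h4 k j i h y
    · intro i j hij x y
      rcases hadj' i j hij with h | h
      · simp only [hq, if_pos h, if_neg (hEne h)]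
      · simp only [hq, if_neg (hEne h), if_pos h]
  choose Θk hpos huni hbi using hglue
  refine ⟨fun c => ∑ k, Θk k c, ⟨⟨fun c => Finset.sum_nonneg fun k _ => hpos k c, ?_⟩, ?_, ?_⟩, ?_⟩
  · -- total mass
    have htot : ∀ k, ∑ c : Pt C, Θk k c = w k := by
      intro k
      have i0 : Fin n := ⟨0, by omega⟩
      calc ∑ c : Pt C, Θk k c
          = ∑ c : Pt C, ∑ x : {x : ℝ // x ∈ C i0}, (if c i0 = x then Θk k c else 0) :=
            Finset.sum_congr rfl fun c _ => (hsum0 (c i0) (fun _ => Θk k c)).symm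
        _ = ∑ x : {x : ℝ // x ∈ C i0}, ∑ c : Pt C, (if c i0 = x then Θk k c else 0) :=
            Finset.sum_comm
        _ = ∑ x : {x : ℝ // x ∈ C i0}, v1 k i0 x :=
            Finset.sum_congr rfl fun x _ => congrFun (huni k i0) x
        _ = w k := h6 k i0
    rw [Finset.sum_comm]
    rw [Finset.sum_congr rfl fun k (_ : k ∈ Finset.univ) => htot k]
    exact h2
  · -- univariate marginals
    intro i
    funext x
    calc projUni (fun c => ∑ k, Θk k c) i x
        = ∑ c : Pt C, ∑ k, (if c i = x then Θk k c else 0) := by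
          unfold projUni
          exact Finset.sum_congr rfl fun c _ => by dsimp only; exact (sum_if_const _ _).symm
      _ = ∑ k, ∑ c : Pt C, (if c i = x then Θk k c else 0) := Finset.sum_comm
      _ = ∑ k, v1 k i x := Finset.sum_congr rfl fun k _ => congrFun (huni k i) x
      _ = μU i x := h8 i x
  · -- bivariate constraints
    intro i j hij
    have hP : projBi (fun c => ∑ k, Θk k c) i j = fun z => ∑ k, v2 k i j z := by
      funext z
      calc projBi (fun c => ∑ k, Θk k c) i j z
          = ∑ c : Pt C, ∑ k, (if c i = z.1 ∧ c j = z.2 then Θk k c else 0) := by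
            unfold projBi
            exact Finset.sum_congr rfl fun c _ => by dsimp only; exact (sum_if_const _ _).symm
        _ = ∑ k, ∑ c : Pt C, (if c i = z.1 ∧ c j = z.2 then Θk k c else 0) := Finset.sum_comm
        _ = ∑ k, q k i j z := Finset.sum_congr rfl fun k _ => by
            rw [← congrFun (hbi k i j (hadj i j hij)) z]
            rfl
        _ = ∑ k, v2 k i j z := Finset.sum_congr rfl fun k _ => by
            simp only [hq, if_pos hij]
    rw [hP]
    exact h9 i j hij
  · -- value inequality
    have hexp : ∀ k, ∑ c : Pt C, Θk k c * (∑ i, a k i * (c i : ℝ) + b k)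
        = (∑ i, ∑ x : {x : ℝ // x ∈ C i}, (x : ℝ) * a k i * v1 k i x) + b k * w k := by
      intro k
      have htot : ∑ c : Pt C, Θk k c = w k := by
        have i0 : Fin n := ⟨0, by omega⟩
        calc ∑ c : Pt C, Θk k c
            = ∑ c : Pt C, ∑ x : {x : ℝ // x ∈ C i0}, (if c i0 = x then Θk k c else 0) :=
              Finset.sum_congr rfl fun c _ => (hsum0 (c i0) (fun _ => Θk k c)).symm
          _ = ∑ x : {x : ℝ // x ∈ C i0}, ∑ c : Pt C, (if c i0 = x then Θk k c else 0) :=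
              Finset.sum_comm
          _ = ∑ x : {x : ℝ // x ∈ C i0}, v1 k i0 x :=
              Finset.sum_congr rfl fun x _ => congrFun (huni k i0) x
          _ = w k := h6 k i0
      calc ∑ c : Pt C, Θk k c * (∑ i, a k i * (c i : ℝ) + b k)
          = ∑ c : Pt C, ((∑ i, a k i * (Θk k c * (c i : ℝ))) + b k * Θk k c) := by
            refine Finset.sum_congr rfl fun c _ => ?_
            rw [mul_add, Finset.mul_sum]
            congr 1
            · exact Finset.sum_congr rfl fun i _ => by ring
            · ring
        _ = (∑ c : Pt C, ∑ i, a k i * (Θk k c * (c i : ℝ))) + ∑ c : Pt C, b k * Θk k c :=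
            Finset.sum_add_distrib
        _ = (∑ i, ∑ c : Pt C, a k i * (Θk k c * (c i : ℝ))) + b k * ∑ c : Pt C, Θk k c := by
            rw [Finset.sum_comm, Finset.mul_sum]
        _ = (∑ i, a k i * ∑ c : Pt C, Θk k c * (c i : ℝ)) + b k * w k := by
            rw [htot]
            congr 1
            exact Finset.sum_congr rfl fun i _ => (Finset.mul_sum _ _ _).symm
        _ = (∑ i, a k i * ∑ x : {x : ℝ // x ∈ C i}, (x : ℝ) * v1 k i x) + b k * w k := by
            congr 1
            refine Finset.sum_congr rfl fun i _ => ?_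
            congr 1
            rw [sum_fiber i (fun c => Θk k c) (fun x => (x : ℝ))]
            refine Finset.sum_congr rfl fun x _ => ?_
            congr 1
            exact congrFun (huni k i) x
        _ = (∑ i, ∑ x : {x : ℝ // x ∈ C i}, (x : ℝ) * a k i * v1 k i x) + b k * w k := by
            congr 1
            refine Finset.sum_congr rfl fun i _ => ?_
            rw [Finset.mul_sum]
            exact Finset.sum_congr rfl fun x _ => by ring
    calc (∑ k, ∑ i, ∑ x : {x : ℝ // x ∈ C i}, (x : ℝ) * a k i * v1 k i x) + ∑ k, b k * w k
        = ∑ k, ((∑ i, ∑ x : {x : ℝ // x ∈ C i}, (x : ℝ) * a k i * v1 k i x) + b k * w k) :=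
          Finset.sum_add_distrib.symm
      _ = ∑ k, ∑ c : Pt C, Θk k c * (∑ i, a k i * (c i : ℝ) + b k) :=
          Finset.sum_congr rfl fun k _ => (hexp k).symm
      _ ≤ ∑ k, ∑ c : Pt C, Θk k c * psi a b c := by
          refine Finset.sum_le_sum fun k _ => Finset.sum_le_sum fun c _ => ?_
          refine mul_le_mul_of_nonneg_left ?_ (hpos k c)
          exact le_ciSup (f := fun k' : Fin K => ∑ i, a k' i * (c i : ℝ) + b k')
            (Set.Finite.bddAbove (Set.finite_range _)) k
      _ = ∑ c : Pt C, (∑ k, Θk k c) * psi a b c := by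
          rw [Finset.sum_comm]
          exact Finset.sum_congr rfl fun c _ => (Finset.sum_mul _ _ _).symm
lemma exists_nbr {n : ℕ} (hn : 2 ≤ n) (G : SimpleGraph (Fin n)) (hconn : G.Connected)
    (i : Fin n) : ∃ j, G.Adj i j := by
  classical
  have : ∃ w : Fin n, w ≠ i := by
    refine ⟨if h : i = ⟨0, by omega⟩ then ⟨1, by omega⟩ else ⟨0, by omega⟩, ?_⟩
    split_ifs with h
    · subst h; intro hh; simp [Fin.ext_iff] at hh
    · exact fun hh => h hh.symm
  obtain ⟨w, hw⟩ := this
  obtain ⟨W⟩ := hconn.preconnected i w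
  obtain ⟨a, ha, b, hb, hab⟩ := cross_lemma G {i} W (Finset.mem_singleton_self i)
    (by simp [hw])
  rw [Finset.mem_singleton] at ha
  exact ⟨b, ha ▸ hab⟩

lemma sSup_eq_sSup_aux {A B : Set ℝ} (hBA : B ⊆ A) (hAbdd : BddAbove A)
    (hBbdd : BddAbove B) (hstep : ∀ V ∈ A, ∃ M ∈ B, V ≤ M) : sSup A = sSup B := by
  by_cases hA : A.Nonempty
  · have hB : B.Nonempty := by
      obtain ⟨V, hV⟩ := hA
      obtain ⟨M, hM, _⟩ := hstep V hV
      exact ⟨M, hM⟩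
    apply le_antisymm
    · refine csSup_le hA fun V hV => ?_
      obtain ⟨M, hM, hle⟩ := hstep V hV
      exact le_trans hle (le_csSup hBbdd hM)
    · exact csSup_le_csSup hAbdd hB hBA
  · have hB : ¬ B.Nonempty := fun ⟨M, hM⟩ => hA ⟨M, hBA hM⟩
    rw [Set.not_nonempty_iff_eq_empty] at hA hB
    rw [hA, hB]

/-- Theorem 3.2: when the bivariate information forms a tree, the optimal value of the
polynomial-sized convex program (cp1) equals the Fréchet bound `sup_{θ ∈ Θ_ρ} E_θ[ψ]`. -/
theorem stmt2
    (n : ℕ) (hn : 2 ≤ n) (C : Fin n → Finset ℝ) (hC : ∀ i, (C i).Nonempty)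
    (E : Finset (Fin n × Fin n)) (hE : IsTreeEdges E)
    (μU : (i : Fin n) → {x : ℝ // x ∈ C i} → ℝ) (hμU : ∀ i, IsPmf (μU i))
    (μB : (i j : Fin n) → ({x : ℝ // x ∈ C i} × {y : ℝ // y ∈ C j}) → ℝ)
    (hμB : ∀ i j, (i, j) ∈ E → IsPmf (μB i j))
    (ρ : ℝ) (hρ : 0 ≤ ρ)
    (K : ℕ) (hK : 1 ≤ K) (a : Fin K → Fin n → ℝ) (b : Fin K → ℝ) :
    sSup {V : ℝ |
      ∃ (w : Fin K → ℝ)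
        (v1 : (k : Fin K) → (i : Fin n) → {x : ℝ // x ∈ C i} → ℝ)
        (v2 : (k : Fin K) → (i j : Fin n) →
          ({x : ℝ // x ∈ C i} × {y : ℝ // y ∈ C j}) → ℝ),
        (∀ k, 0 ≤ w k) ∧ (∑ k, w k = 1) ∧
        (∀ k, ∀ i j, (i, j) ∈ E → ∀ p, 0 ≤ v2 k i j p) ∧
        (∀ k, ∀ i j, (i, j) ∈ E → ∀ x : {x : ℝ // x ∈ C i},
          ∑ y : {y : ℝ // y ∈ C j}, v2 k i j (x, y) = v1 k i x) ∧
        (∀ k, ∀ i j, (i, j) ∈ E → ∀ y : {y : ℝ // y ∈ C j},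
          ∑ x : {x : ℝ // x ∈ C i}, v2 k i j (x, y) = v1 k j y) ∧
        (∀ k, ∀ i, ∑ x : {x : ℝ // x ∈ C i}, v1 k i x = w k) ∧
        (∀ k, ∀ i j, (i, j) ∈ E →
          ∑ p : {x : ℝ // x ∈ C i} × {y : ℝ // y ∈ C j}, v2 k i j p = w k) ∧
        (∀ i, ∀ x : {x : ℝ // x ∈ C i}, ∑ k, v1 k i x = μU i x) ∧
        (∀ i j, (i, j) ∈ E →
          Vanishes (fun p => ∑ k, v2 k i j p) (μB i j) ∧
          KL (fun p => ∑ k, v2 k i j p) (μB i j) ≤ ρ) ∧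
        V = (∑ k, ∑ i, ∑ x : {x : ℝ // x ∈ C i}, (x : ℝ) * a k i * v1 k i x) +
            ∑ k, b k * w k} =
    sSup {M : ℝ | ∃ θ : Pt C → ℝ, InTheta E μU μB ρ θ ∧
        M = ∑ c : Pt C, θ c * psi a b c} := by
  classical
  haveI hPtne : Nonempty (Pt C) := ⟨fun i => ⟨(hC i).choose, (hC i).choose_spec⟩⟩
  refine sSup_eq_sSup_aux ?_ ?_ ?_ ?_
  · -- RHS set ⊆ LHS set
    rintro M ⟨θ, hθ, rfl⟩
    obtain ⟨w, v1, v2, c1, c2, c3, c4, c5, c6, c7, c8, c9, hval⟩ := easy_dir hθ hK a b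
    exact ⟨w, v1, v2, c1, c2, c3, c4, c5, c6, c7, c8, c9, hval⟩
  · -- LHS set bounded above
    refine ⟨(∑ k, ∑ i, ∑ x : {x : ℝ // x ∈ C i}, |(x : ℝ) * a k i|) + ∑ k, |b k|, ?_⟩
    rintro V ⟨w, v1, v2, c1, c2, c3, c4, c5, c6, c7, c8, c9, rfl⟩
    have hv1nn : ∀ k i x, 0 ≤ v1 k i x := by
      intro k i x
      obtain ⟨j, hj⟩ := exists_nbr hn _ hE.2.isConnected i
      rw [treeGraph, SimpleGraph.fromRel_adj] at hj
      rcases hj.2 with h | h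
      · rw [← c4 k i j h x]
        exact Finset.sum_nonneg fun y _ => c3 k i j h (x, y)
      · rw [← c5 k j i h x]
        exact Finset.sum_nonneg fun y _ => c3 k j i h (y, x)
    have hwle : ∀ k, w k ≤ 1 := by
      intro k
      rw [← c2]
      exact Finset.single_le_sum (fun k' _ => c1 k') (Finset.mem_univ k)
    have hv1le : ∀ k i x, v1 k i x ≤ 1 := by
      intro k i x
      refine le_trans ?_ (hwle k)
      rw [← c6 k i]
      exact Finset.single_le_sum (fun x' _ => hv1nn k i x') (Finset.mem_univ x)
    refine add_le_add ?_ ?_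
    · refine Finset.sum_le_sum fun k _ => Finset.sum_le_sum fun i _ =>
        Finset.sum_le_sum fun x _ => ?_
      calc (x : ℝ) * a k i * v1 k i x
          ≤ |(x : ℝ) * a k i| * v1 k i x :=
            mul_le_mul_of_nonneg_right (le_abs_self _) (hv1nn k i x)
        _ ≤ |(x : ℝ) * a k i| * 1 :=
            mul_le_mul_of_nonneg_left (hv1le k i x) (abs_nonneg _)
        _ = |(x : ℝ) * a k i| := mul_one _
    · refine Finset.sum_le_sum fun k _ => ?_
      calc b k * w k ≤ |b k| * w k := mul_le_mul_of_nonneg_right (le_abs_self _) (c1 k)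
        _ ≤ |b k| * 1 := mul_le_mul_of_nonneg_left (hwle k) (abs_nonneg _)
        _ = |b k| := mul_one _
  · -- RHS set bounded above
    refine ⟨(Finset.univ : Finset (Pt C)).sup' Finset.univ_nonempty (psi a b), ?_⟩
    rintro M ⟨θ, hθ, rfl⟩
    calc ∑ c : Pt C, θ c * psi a b c
        ≤ ∑ c : Pt C, θ c * (Finset.univ : Finset (Pt C)).sup' Finset.univ_nonempty (psi a b) :=
          Finset.sum_le_sum fun c _ => mul_le_mul_of_nonneg_left
            (Finset.le_sup' (psi a b) (Finset.mem_univ c)) (hθ.1.1 c)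
      _ = (Finset.univ : Finset (Pt C)).sup' Finset.univ_nonempty (psi a b) := by
          rw [← Finset.sum_mul, hθ.1.2, one_mul]
  · -- every LHS value dominated by an RHS value
    rintro V ⟨w, v1, v2, c1, c2, c3, c4, c5, c6, c7, c8, c9, rfl⟩
    obtain ⟨θ, hθ, hle⟩ := hard_dir hn hC hE hK a b w v1 v2 c1 c2 c3 c4 c5 c6 c8 c9
    exact ⟨∑ c : Pt C, θ c * psi a b c, ⟨θ, hθ, rfl⟩, hle⟩
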